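/- arXiv:2408.08556 — 3 statements merged into one kernel-verified Lean document; each statement's English description precedes it below -/
import Mathlib

section
/- Fix an integer N ≥ 2, a vector v ∈ ℂ^N, and an integer 1 ≤ m ≤ N. For a subset C ⊆ {1,…,N} with |C| = m, let v_C ∈ ℂ^N be the restriction of v to C (i.e. (v_C)_i = v_i if i ∈ C and 0 otherwise). Then the average over all size-m subsets C of the rank-one matrix v_C v_C† equals (m(N−m)/(N(N−1))) · D + (m(m−1)/(N(N−1))) · v v†, where D is the diagonal matrix with D_{ii} = |v_i|² and v v† is the outer product of v with its conjugate transpose. -/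
open Finset in
lemma count_subsets {α : Type*} [DecidableEq α] (s t : Finset α) (m : ℕ)
    (hts : t ⊆ s) (htm : t.card ≤ m) :
    ((powersetCard m s).filter (fun C => t ⊆ C)).card
      = (s.card - t.card).choose (m - t.card) := by
  rw [← Finset.card_sdiff_of_subset hts, ← Finset.card_powersetCard]
  apply Finset.card_bij (fun C _ => C \ t)
  · intro C hC
    simp only [mem_filter, mem_powersetCard] at hC
    obtain ⟨⟨hCs, hCc⟩, htC⟩ := hC
    simp only [mem_powersetCard]
    exact ⟨sdiff_subset_sdiff hCs le_rfl, by rw [card_sdiff_of_subset htC, hCc]⟩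
  · intro C1 h1 C2 h2 h
    simp only [mem_filter, mem_powersetCard] at h1 h2
    have e1 : C1 = C1 \ t ∪ t := by rw [sdiff_union_of_subset h1.2]
    have e2 : C2 = C2 \ t ∪ t := by rw [sdiff_union_of_subset h2.2]
    rw [e1, e2, h]
  · intro A hA
    simp only [mem_powersetCard] at hA
    refine ⟨A ∪ t, ?_, ?_⟩
    · simp only [mem_filter, mem_powersetCard]
      have hdisj : Disjoint A t := (subset_sdiff.mp hA.1).2
      refine ⟨⟨union_subset (hA.1.trans (sdiff_subset)) hts, ?_⟩, subset_union_right⟩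
      rw [card_union_of_disjoint hdisj, hA.2]
      omega
    · rw [union_sdiff_right, sdiff_eq_self_of_disjoint (subset_sdiff.mp hA.1).2]

/-- Exact second moment of the column-subsampled vector: averaging the outer
product `v_C v_C†` over all size-`m` subsets `C` of `{1,…,N}` yields
`(m(N−m)/(N(N−1))) · D + (m(m−1)/(N(N−1))) · v v†` where `D = diag(|v_i|²)`. -/
theorem stmt_3 (N : ℕ) (hN : 2 ≤ N) (v : Fin N → ℂ) (m : ℕ) (hm1 : 1 ≤ m) (hmN : m ≤ N) :
    (1 / (N.choose m : ℂ)) •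
      ∑ C ∈ Finset.powersetCard m (Finset.univ : Finset (Fin N)),
        Matrix.of (fun i j : Fin N =>
          (if i ∈ C then v i else 0) * star (if j ∈ C then v j else 0))
      = (((m : ℂ) * ((N : ℂ) - (m : ℂ))) / ((N : ℂ) * ((N : ℂ) - 1))) •
          Matrix.diagonal (fun i : Fin N => v i * star (v i))
        + (((m : ℂ) * ((m : ℂ) - 1)) / ((N : ℂ) * ((N : ℂ) - 1))) •
          Matrix.of (fun i j : Fin N => v i * star (v j)) := by
  have hNne : (N : ℂ) ≠ 0 := Nat.cast_ne_zero.mpr (by omega)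
  have hNm1 : ((N - 1 : ℕ) : ℂ) = (N : ℂ) - 1 := by
    push_cast [Nat.cast_sub (by omega : 1 ≤ N)]; ring
  have hN1 : ((N : ℂ) - 1) ≠ 0 := hNm1 ▸ Nat.cast_ne_zero.mpr (by omega)
  have hchoose : (N.choose m : ℂ) ≠ 0 := Nat.cast_ne_zero.mpr (Nat.choose_pos hmN).ne'
  ext i j
  simp only [Matrix.smul_apply, Matrix.sum_apply, Matrix.of_apply, Matrix.add_apply,
    smul_eq_mul]
  have hsummand : ∀ C ∈ Finset.powersetCard m (Finset.univ : Finset (Fin N)),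
      (if i ∈ C then v i else 0) * star (if j ∈ C then v j else 0)
        = if ({i, j} : Finset (Fin N)) ⊆ C then v i * star (v j) else 0 := by
    intro C _
    by_cases hi : i ∈ C <;> by_cases hj : j ∈ C <;>
      simp [hi, hj, Finset.insert_subset_iff]
  rw [Finset.sum_congr rfl hsummand, Finset.sum_ite, Finset.sum_const, Finset.sum_const_zero,
    add_zero, nsmul_eq_mul]
  by_cases hij : i = j
  · subst hij
    have hcard : ({i, i} : Finset (Fin N)) = {i} := by simp
    rw [hcard]
    have hcount := count_subsets (Finset.univ : Finset (Fin N)) {i} m (by simp) (by simpa)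
    simp only [Finset.card_univ, Fintype.card_fin, Finset.card_singleton] at hcount
    rw [hcount]
    have hnat : N * (N - 1).choose (m - 1) = m * N.choose m := by
      have h := Nat.add_one_mul_choose_eq (N - 1) (m - 1)
      rw [show (N-1) + 1 = N from by omega, show (m-1) + 1 = m from by omega] at h
      exact h.trans (Nat.mul_comm _ _)
    have hC : (N : ℂ) * ((N - 1).choose (m - 1) : ℂ) = (m : ℂ) * (N.choose m : ℂ) := by
      exact_mod_cast hnat
    simp only [Matrix.diagonal_apply_eq]
    have key : (1 / (N.choose m : ℂ)) * (((N-1).choose (m-1) : ℕ) : ℂ)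
        = ((m : ℂ) * ((N : ℂ) - (m : ℂ))) / ((N : ℂ) * ((N : ℂ) - 1))
          + ((m : ℂ) * ((m : ℂ) - 1)) / ((N : ℂ) * ((N : ℂ) - 1)) := by
      field_simp
      linear_combination ((N:ℂ) - 1) * hC
    linear_combination (v i * star (v i)) * key
  · simp only [Matrix.diagonal_apply_ne _ hij]
    have hcard2 : ({i, j} : Finset (Fin N)).card = 2 := by
      rw [Finset.card_insert_of_notMem (by simpa using hij), Finset.card_singleton]
    by_cases hm2 : 2 ≤ m
    · have hcount := count_subsets (Finset.univ : Finset (Fin N)) {i, j} m (by simp)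
        (by rw [hcard2]; exact hm2)
      simp only [Finset.card_univ, Fintype.card_fin, hcard2] at hcount
      rw [hcount]
      have hnat : N * (N - 1) * (N - 2).choose (m - 2) = m * (m - 1) * N.choose m := by
        have h1 := Nat.add_one_mul_choose_eq (N - 1) (m - 1)
        rw [show (N-1) + 1 = N from by omega, show (m-1) + 1 = m from by omega] at h1
        have h2 := Nat.add_one_mul_choose_eq (N - 2) (m - 2)
        rw [show (N-2) + 1 = N-1 from by omega, show (m-2) + 1 = m-1 from by omega] at h2
        calc N * (N-1) * (N-2).choose (m-2) = N * ((N-1) * (N-2).choose (m-2)) := by ring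
        _ = N * ((N-1).choose (m-1) * (m-1)) := by rw [h2]
        _ = (m-1) * (N * (N-1).choose (m-1)) := by ring
        _ = (m-1) * (N.choose m * m) := by rw [h1]
        _ = m * (m-1) * N.choose m := by ring
      have hC : (N : ℂ) * ((N:ℂ) - 1) * ((N - 2).choose (m - 2) : ℂ)
          = (m : ℂ) * ((m:ℂ) - 1) * (N.choose m : ℂ) := by
        have h := congrArg (Nat.cast : ℕ → ℂ) hnat
        push_cast [Nat.cast_sub (by omega : 1 ≤ N), Nat.cast_sub (by omega : 2 ≤ N),
          Nat.cast_sub (by omega : 1 ≤ m), Nat.cast_sub (by omega : 2 ≤ m)] at h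
        linear_combination h
      have key : (1 / (N.choose m : ℂ)) * (((N-2).choose (m-2) : ℕ) : ℂ)
          = ((m : ℂ) * ((m : ℂ) - 1)) / ((N : ℂ) * ((N : ℂ) - 1)) := by
        field_simp
        linear_combination hC
      linear_combination (v i * star (v j)) * key
    · have hm : m = 1 := by omega
      subst hm
      have hempty : (Finset.powersetCard 1 (Finset.univ : Finset (Fin N))).filter
          (fun C => ({i, j} : Finset (Fin N)) ⊆ C) = ∅ := by
        rw [Finset.filter_eq_empty_iff]
        intro C hC hsub
        rw [Finset.mem_powersetCard] at hC
        have := Finset.card_le_card hsub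
        omega
      rw [show Finset.filter (fun C => ({i,j} : Finset (Fin N)) ⊆ C)
          (Finset.powersetCard 1 Finset.univ) = ∅ from hempty]
      simp
end

section
/- Fix an integer N ≥ 1, a matrix H ∈ ℂ^{N×N}, a vector x ∈ ℂ^N, and integers 1 ≤ m_r ≤ N, 1 ≤ m_c ≤ N. For subsets R, C ⊆ {1,…,N} with |R| = m_r, |C| = m_c, define g(R,C) ∈ ℂ^N by g(R,C)_c = Σ_{r∈R} H_{c,r} x_r for c ∈ C and 0 otherwise, and define ḡ(C) ∈ ℂ^N by ḡ(C)_c = (Hx)_c for c ∈ C and 0 otherwise. Then the average over all such pairs (R,C), sampled uniformly and independently, of ‖g(R,C) − ḡ(C)‖² is at most ((N − m_r)/N) · ‖H‖² · ‖x‖², where ‖H‖ is the operator norm of H and ‖·‖ on vectors is the Euclidean norm. -/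
/-- A vector in `Fin N → ℂ` regarded as an element of `EuclideanSpace ℂ (Fin N)`. -/
noncomputable def toE {N : ℕ} (v : Fin N → ℂ) : EuclideanSpace ℂ (Fin N) := WithLp.toLp 2 v

/-- Operator (spectral) norm of a complex matrix. -/
noncomputable def opNorm {N : ℕ} (A : Matrix (Fin N) (Fin N) ℂ) : ℝ :=
  ‖(Matrix.toEuclideanCLM (𝕜 := ℂ) A : EuclideanSpace ℂ (Fin N) →L[ℂ] EuclideanSpace ℂ (Fin N))‖

lemma normE_sq {N : ℕ} (v : Fin N → ℂ) : ‖toE v‖ ^ 2 = ∑ i, ‖v i‖ ^ 2 := by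
  rw [EuclideanSpace.norm_eq, Real.sq_sqrt]
  · rfl
  · positivity

lemma mulVec_norm_le {N : ℕ} (A : Matrix (Fin N) (Fin N) ℂ) (v : Fin N → ℂ) :
    ‖toE (A.mulVec v)‖ ≤ opNorm A * ‖toE v‖ := by
  have h := (Matrix.toEuclideanCLM (𝕜 := ℂ) A).le_opNorm (toE v)
  have h2 : Matrix.toEuclideanCLM (𝕜 := ℂ) A (toE v) = toE (A.mulVec v) := rfl
  rwa [h2] at h

lemma filter_card {N mr : ℕ} (r : Fin N) :
    ((Finset.powersetCard mr (Finset.univ : Finset (Fin N))).filter (fun R => r ∉ R)).card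
      = (N - 1).choose mr := by
  have h : ((Finset.powersetCard mr (Finset.univ : Finset (Fin N))).filter (fun R => r ∉ R))
      = Finset.powersetCard mr (Finset.univ.erase r) := by
    ext S
    simp only [Finset.mem_filter, Finset.mem_powersetCard, Finset.subset_erase,
      Finset.subset_univ, true_and]
    tauto
  rw [h, Finset.card_powersetCard, Finset.card_erase_of_mem (Finset.mem_univ r),
    Finset.card_fin]

lemma choose_id {N mr : ℕ} (hN : 1 ≤ N) (hmr1 : 1 ≤ mr) (hmrN : mr ≤ N) :
    ((N : ℝ) - mr) * N.choose mr = N * (N - 1).choose mr := by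
  obtain ⟨n, rfl⟩ : ∃ n, N = n + 1 := ⟨N - 1, (Nat.succ_pred_eq_of_pos hN).symm⟩
  obtain ⟨k, rfl⟩ : ∃ k, mr = k + 1 := ⟨mr - 1, (Nat.succ_pred_eq_of_pos hmr1).symm⟩
  have h1 : (n + 1).choose (k + 1) = n.choose k + n.choose (k + 1) := Nat.choose_succ_succ n k
  have h2 : (n + 1) * n.choose k = (n + 1).choose (k + 1) * (k + 1) := Nat.add_one_mul_choose_eq n k
  have h1' : (((n + 1).choose (k + 1) : ℕ) : ℝ) = (n.choose k : ℝ) + (n.choose (k + 1) : ℝ) := by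
    exact_mod_cast h1
  have h2' : ((n : ℝ) + 1) * (n.choose k : ℝ) = ((n + 1).choose (k + 1) : ℝ) * ((k : ℝ) + 1) := by
    exact_mod_cast h2
  simp only [Nat.add_sub_cancel]
  push_cast
  nlinarith [h1', h2']

/-- Variance bound from row subsampling: the average over uniformly and
independently sampled index sets `R` (`|R| = m_r`) and `C` (`|C| = m_c`) of
`‖g(R,C) − ḡ(C)‖²` is at most `((N − m_r)/N)·‖H‖²·‖x‖²`. -/
theorem stmt_4 (N : ℕ) (hN : 1 ≤ N) (H : Matrix (Fin N) (Fin N) ℂ) (x : Fin N → ℂ)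
    (mr mc : ℕ) (hmr1 : 1 ≤ mr) (hmrN : mr ≤ N) (hmc1 : 1 ≤ mc) (hmcN : mc ≤ N) :
    (1 / ((N.choose mr : ℝ) * (N.choose mc))) *
      ∑ R ∈ Finset.powersetCard mr (Finset.univ : Finset (Fin N)),
        ∑ C ∈ Finset.powersetCard mc (Finset.univ : Finset (Fin N)),
          ‖toE (fun c : Fin N => if c ∈ C then ∑ r ∈ R, H c r * x r else 0) -
            toE (fun c : Fin N => if c ∈ C then H.mulVec x c else 0)‖ ^ 2
      ≤ (((N : ℝ) - (mr : ℝ)) / (N : ℝ)) * opNorm H ^ 2 * ‖toE x‖ ^ 2 := by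
  classical
  set f : Fin N → ℝ := fun r => ‖x r‖ ^ 2 with hf
  have hxnorm : ‖toE x‖ ^ 2 = ∑ r, f r := normE_sq x
  have hcR : 0 < (N.choose mr : ℝ) := by exact_mod_cast Nat.choose_pos hmrN
  have hcC : 0 < (N.choose mc : ℝ) := by exact_mod_cast Nat.choose_pos hmcN
  have hN0 : (0 : ℝ) < N := by exact_mod_cast hN
  -- inner bound
  have key : ∀ R ∈ Finset.powersetCard mr (Finset.univ : Finset (Fin N)),
      ∀ C ∈ Finset.powersetCard mc (Finset.univ : Finset (Fin N)),
      ‖toE (fun c : Fin N => if c ∈ C then ∑ r ∈ R, H c r * x r else 0) -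
        toE (fun c : Fin N => if c ∈ C then H.mulVec x c else 0)‖ ^ 2
        ≤ opNorm H ^ 2 * ∑ r, (if r ∈ R then 0 else f r) := by
    intro R _ C _
    set xR : Fin N → ℂ := fun r => if r ∈ R then 0 else x r with hxR
    have hsplit : ∀ c, (∑ r ∈ R, H c r * x r) - H.mulVec x c = -(H.mulVec xR c) := by
      intro c
      have h1 : H.mulVec xR c = ∑ r ∈ Finset.univ \ R, H c r * x r := by
        simp only [Matrix.mulVec, dotProduct, hxR, mul_ite, mul_zero]
        rw [Finset.sum_ite, Finset.sum_const_zero, zero_add]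
        congr 1
        ext r
        simp
      have h2 : H.mulVec x c = ∑ r, H c r * x r := rfl
      rw [h1, h2, Finset.sum_sdiff_eq_sub (Finset.subset_univ R)]
      ring
    have e1 : toE (fun c : Fin N => if c ∈ C then ∑ r ∈ R, H c r * x r else 0) -
        toE (fun c : Fin N => if c ∈ C then H.mulVec x c else 0)
        = toE (fun c : Fin N => (if c ∈ C then ∑ r ∈ R, H c r * x r else 0) -
            (if c ∈ C then H.mulVec x c else 0)) := rfl
    rw [e1, normE_sq]
    have step1 : ∑ c, ‖(if c ∈ C then ∑ r ∈ R, H c r * x r else 0) -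
        (if c ∈ C then H.mulVec x c else 0)‖ ^ 2 ≤ ∑ c, ‖H.mulVec xR c‖ ^ 2 := by
      apply Finset.sum_le_sum
      intro c _
      by_cases hc : c ∈ C
      · simp only [hc, if_true, hsplit c, norm_neg, le_refl]
      · have h0 : ((if c ∈ C then ∑ r ∈ R, H c r * x r else 0) -
            (if c ∈ C then H.mulVec x c else 0)) = 0 := by simp [hc]
        rw [h0]
        simp only [norm_zero]
        simpa using sq_nonneg ‖H.mulVec xR c‖

    have step2 : ∑ c, ‖H.mulVec xR c‖ ^ 2 ≤ opNorm H ^ 2 * ∑ r, (if r ∈ R then 0 else f r) := by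
      have h3 : ∑ c, ‖H.mulVec xR c‖ ^ 2 = ‖toE (H.mulVec xR)‖ ^ 2 := (normE_sq _).symm
      have h4 : ‖toE xR‖ ^ 2 = ∑ r, (if r ∈ R then 0 else f r) := by
        rw [normE_sq]
        congr 1
        ext r
        by_cases hr : r ∈ R <;> simp [hxR, hr, hf]
      rw [h3, ← h4]
      have := mulVec_norm_le H xR
      have h5 : ‖toE (H.mulVec xR)‖ ^ 2 ≤ (opNorm H * ‖toE xR‖) ^ 2 := by
        apply pow_le_pow_left₀ (norm_nonneg _) this
      calc ‖toE (H.mulVec xR)‖ ^ 2 ≤ (opNorm H * ‖toE xR‖) ^ 2 := h5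
        _ = opNorm H ^ 2 * ‖toE xR‖ ^ 2 := by ring
    exact step1.trans step2
  -- sum bound
  have hsum : ∑ R ∈ Finset.powersetCard mr (Finset.univ : Finset (Fin N)),
      ∑ C ∈ Finset.powersetCard mc (Finset.univ : Finset (Fin N)),
        ‖toE (fun c : Fin N => if c ∈ C then ∑ r ∈ R, H c r * x r else 0) -
          toE (fun c : Fin N => if c ∈ C then H.mulVec x c else 0)‖ ^ 2
      ≤ (N.choose mc : ℝ) * ((N - 1).choose mr : ℝ) * (opNorm H ^ 2 * ∑ r, f r) := by
    calc ∑ R ∈ Finset.powersetCard mr (Finset.univ : Finset (Fin N)),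
        ∑ C ∈ Finset.powersetCard mc (Finset.univ : Finset (Fin N)),
          ‖toE (fun c : Fin N => if c ∈ C then ∑ r ∈ R, H c r * x r else 0) -
            toE (fun c : Fin N => if c ∈ C then H.mulVec x c else 0)‖ ^ 2
        ≤ ∑ R ∈ Finset.powersetCard mr (Finset.univ : Finset (Fin N)),
          ∑ C ∈ Finset.powersetCard mc (Finset.univ : Finset (Fin N)),
            opNorm H ^ 2 * ∑ r, (if r ∈ R then 0 else f r) := by
          apply Finset.sum_le_sum
          intro R hR
          exact Finset.sum_le_sum (fun C hC => key R hR C hC)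
      _ = (N.choose mc : ℝ) * ∑ R ∈ Finset.powersetCard mr (Finset.univ : Finset (Fin N)),
            opNorm H ^ 2 * ∑ r, (if r ∈ R then 0 else f r) := by
          rw [Finset.sum_comm]
          rw [Finset.sum_const]
          simp [Finset.card_powersetCard, mul_comm]
      _ = (N.choose mc : ℝ) * (opNorm H ^ 2 *
            ∑ R ∈ Finset.powersetCard mr (Finset.univ : Finset (Fin N)),
              ∑ r, (if r ∈ R then 0 else f r)) := by
          rw [← Finset.mul_sum]
      _ = (N.choose mc : ℝ) * ((N - 1).choose mr : ℝ) * (opNorm H ^ 2 * ∑ r, f r) := by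
          have hcount : ∑ R ∈ Finset.powersetCard mr (Finset.univ : Finset (Fin N)),
              ∑ r, (if r ∈ R then 0 else f r)
              = ((N - 1).choose mr : ℝ) * ∑ r, f r := by
            rw [Finset.sum_comm]
            rw [Finset.mul_sum]
            apply Finset.sum_congr rfl
            intro r _
            have : ∀ R : Finset (Fin N), (if r ∈ R then (0:ℝ) else f r)
                = if r ∉ R then f r else 0 := by
              intro R; by_cases h : r ∈ R <;> simp [h]
            simp_rw [this]
            rw [← Finset.sum_filter, Finset.sum_const, filter_card r, nsmul_eq_mul]
          rw [hcount]; ring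
  -- conclude
  have hfinal : (1 / ((N.choose mr : ℝ) * (N.choose mc))) *
      ((N.choose mc : ℝ) * ((N - 1).choose mr : ℝ) * (opNorm H ^ 2 * ∑ r, f r))
      = (((N : ℝ) - (mr : ℝ)) / (N : ℝ)) * opNorm H ^ 2 * ‖toE x‖ ^ 2 := by
    rw [hxnorm]
    have h6 : ((N - 1).choose mr : ℝ) / (N.choose mr : ℝ) = ((N : ℝ) - mr) / N := by
      rw [div_eq_div_iff hcR.ne' hN0.ne']
      linarith [choose_id hN hmr1 hmrN]
    rw [← h6]
    field_simp
  rw [← hfinal]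
  apply mul_le_mul_of_nonneg_left hsum
  positivity
end

section
/- Let K ≥ 1 be an integer, and let f : ℝ → ℝ be a differentiable function with |f(y)| ≤ M₀ and |f′(y)| ≤ M₁ for all y ∈ ℝ, for constants M₀, M₁ ≥ 0. Define the Fejér kernel S_K(y) = sin²(K·y/2)/(K·sin²(y/2)) for y with sin(y/2) ≠ 0, and the convolution (f ∗ S_K)(x) = (1/(2π)) ∫_{−π}^{π} S_K(y)·f(x − y) dy. Then for every δ ∈ (0, π] and every x ∈ ℝ: |(f ∗ S_K)(x) − f(x)| ≤ δ·M₁ + 2·M₀/(K·sin²(δ/2)). -/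
open Real

lemma sin_sq_sub' (A B : ℝ) : sin A ^ 2 - sin B ^ 2 = sin (A+B) * sin (A-B) := by
  rw [Real.sin_add, Real.sin_sub]
  nlinarith [Real.sin_sq_add_cos_sq A, Real.sin_sq_add_cos_sq B]

lemma dirichlet' (K : ℕ) (t : ℝ) :
    Real.sin t * (2 * ∑ m ∈ Finset.range (K+1), Real.cos (2*m*t) - 1)
      = Real.sin ((2*K+1)*t) := by
  induction K with
  | zero => norm_num
  | succ n ih =>
    rw [Finset.sum_range_succ]
    have h : Real.sin ((2*(n+1:ℕ)+1)*t) - Real.sin ((2*(n:ℕ)+1)*t)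
        = 2 * Real.sin t * Real.cos (2*(n+1:ℕ)*t) := by
      rw [Real.sin_sub_sin]
      push_cast
      ring_nf
    push_cast at h ih ⊢
    nlinarith [h, ih]

lemma fejer_key (K : ℕ) (t : ℝ) :
    Real.sin ((K:ℝ) * t) ^ 2
      = Real.sin t ^ 2 * (2 * ∑ m ∈ Finset.range K, ((K:ℝ) - m) * Real.cos (2*m*t) - K) := by
  induction K with
  | zero => simp
  | succ n ih =>
    have hd := dirichlet' n t
    have hsq := sin_sq_sub' (((n:ℝ)+1)*t) ((n:ℝ)*t)
    have harg1 : ((n:ℝ)+1)*t + (n:ℝ)*t = (2*(n:ℝ)+1)*t := by ring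
    have harg2 : ((n:ℝ)+1)*t - (n:ℝ)*t = t := by ring
    rw [harg1, harg2] at hsq
    have hsplit : ∑ m ∈ Finset.range (n+1), (((n:ℝ)+1) - m) * Real.cos (2*m*t)
        = (∑ m ∈ Finset.range n, ((n:ℝ) - m) * Real.cos (2*m*t))
          + ∑ m ∈ Finset.range (n+1), Real.cos (2*m*t) := by
      have h1 : ∀ m ∈ Finset.range (n+1), (((n:ℝ)+1) - m) * Real.cos (2*m*t)
          = ((n:ℝ) - m) * Real.cos (2*m*t) + Real.cos (2*m*t) := fun m _ => by ring
      rw [Finset.sum_congr rfl h1, Finset.sum_add_distrib,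
        Finset.sum_range_succ (f := fun m => ((n:ℝ) - (m:ℝ)) * Real.cos (2*m*t))]
      push_cast
      ring
    push_cast [hsplit] at ih hsq hd ⊢
    linear_combination ih + hsq - Real.sin t * hd

lemma cos_int (m : ℕ) : ∫ y in (-π)..π, Real.cos (m*y) = if m = 0 then 2*π else 0 := by
  rcases Nat.eq_zero_or_pos m with hm | hm
  · simp [hm, two_mul]
  · have hm' : (m:ℝ) ≠ 0 := Nat.cast_ne_zero.mpr hm.ne'
    rw [if_neg hm.ne']
    rw [intervalIntegral.integral_comp_mul_left Real.cos hm']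
    rw [integral_cos]
    simp [mul_comm (π), Real.sin_nat_mul_pi]

lemma fejer_int (K : ℕ) (hK : 1 ≤ K) :
    ∫ y in (-π)..π, (2 * ∑ m ∈ Finset.range K, ((K:ℝ) - m) * Real.cos (m*y) - K)
      = 2 * π * K := by
  have hint : ∀ m ∈ Finset.range K, IntervalIntegrable
      (fun y => ((K:ℝ) - m) * Real.cos (m*y)) MeasureTheory.volume (-π) π :=
    fun m _ => (Continuous.intervalIntegrable (by continuity) _ _)
  have h1 : IntervalIntegrable
      (fun y => 2 * ∑ m ∈ Finset.range K, ((K:ℝ) - m) * Real.cos (m*y))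
      MeasureTheory.volume (-π) π := by
    apply Continuous.intervalIntegrable
    continuity
  rw [intervalIntegral.integral_sub h1 (intervalIntegrable_const)]
  rw [intervalIntegral.integral_const_mul, intervalIntegral.integral_finset_sum hint]
  have h2 : ∀ m ∈ Finset.range K, (∫ y in (-π)..π, ((K:ℝ) - m) * Real.cos (m*y))
      = ((K:ℝ) - m) * (if m = 0 then 2*π else 0) := by
    intro m _
    rw [intervalIntegral.integral_const_mul, cos_int]
  rw [Finset.sum_congr rfl h2]
  rw [Finset.sum_eq_single_of_mem 0 (Finset.mem_range.mpr hK) (fun b _ hb => by simp [hb])]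
  simp
  ring

set_option maxHeartbeats 1000000 in
/-- Fejér approximation bound: for a differentiable `f` with `|f| ≤ M₀` and
`|f′| ≤ M₁`, the Fejér-smoothed average `(f ∗ S_K)(x) = (1/(2π))∫_{−π}^{π} S_K(y) f(x − y) dy`
satisfies `|(f ∗ S_K)(x) − f(x)| ≤ δM₁ + 2M₀/(K sin²(δ/2))` for every `δ ∈ (0, π]`. -/
theorem stmt_19 (K : ℕ) (hK : 1 ≤ K)
    (f : ℝ → ℝ) (hf : Differentiable ℝ f)
    (M₀ M₁ : ℝ) (hM₀ : 0 ≤ M₀) (hM₁ : 0 ≤ M₁)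
    (hfb : ∀ y : ℝ, |f y| ≤ M₀) (hfd : ∀ y : ℝ, |deriv f y| ≤ M₁)
    (δ : ℝ) (hδ0 : 0 < δ) (hδπ : δ ≤ π) (x : ℝ) :
    |(1 / (2 * π)) *
        (∫ y in (-π)..π, (Real.sin (K * y / 2) ^ 2 / (K * Real.sin (y / 2) ^ 2)) * f (x - y))
      - f x| ≤ δ * M₁ + 2 * M₀ / (K * Real.sin (δ / 2) ^ 2) := by
  have hπ : (0:ℝ) < π := Real.pi_pos
  have hK0 : (0:ℝ) < K := by exact_mod_cast hK
  have hsδ : 0 < Real.sin (δ/2) :=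
    Real.sin_pos_of_pos_of_lt_pi (by linarith) (by linarith)
  set C : ℝ := 2 * M₀ / (K * Real.sin (δ/2)^2) with hCdef
  have hC : 0 ≤ C := by positivity
  set N : ℝ → ℝ := fun y => 2 * ∑ m ∈ Finset.range K, ((K:ℝ) - m) * Real.cos (m*y) - K
    with hNdef
  set T : ℝ → ℝ := fun y => N y / K with hTdef
  have hNcont : Continuous N := by
    apply Continuous.sub _ continuous_const
    apply Continuous.mul continuous_const
    apply continuous_finset_sum
    intro m _
    continuity
  have hTcont : Continuous T := hNcont.div_const _
  have hkeyN : ∀ y : ℝ, Real.sin ((K:ℝ) * (y/2))^2 = Real.sin (y/2)^2 * N y := by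
    intro y
    have h := fejer_key K (y/2)
    have harg : ∀ m : ℕ, 2*(m:ℝ)*(y/2) = (m:ℝ)*y := fun m => by ring
    simp only [harg] at h
    exact h
  have hsin_ne : ∀ y : ℝ, -π ≤ y → y ≤ π → y ≠ 0 → Real.sin (y/2) ≠ 0 := by
    intro y h1 h2 h3 hcon
    have := (Real.sin_eq_zero_iff_of_lt_of_lt (by linarith) (by linarith)).mp hcon
    exact h3 (by linarith)
  have hSeqT : ∀ y : ℝ, Real.sin (y/2) ≠ 0 →
      Real.sin ((K:ℝ) * y / 2) ^ 2 / ((K:ℝ) * Real.sin (y/2) ^ 2) = T y := by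
    intro y hy
    have h1 : (K:ℝ) * y / 2 = (K:ℝ) * (y/2) := by ring
    rw [h1, hkeyN y, hTdef]
    field_simp
  have hT_nonneg : ∀ y : ℝ, Real.sin (y/2) ≠ 0 → 0 ≤ T y := by
    intro y hy
    rw [← hSeqT y hy]
    positivity
  have hTint : (∫ y in (-π)..π, T y) = 2*π := by
    rw [hTdef]
    simp only [intervalIntegral.integral_div]
    rw [hNdef, fejer_int K hK]
    field_simp
  -- replace the singular kernel by T a.e.
  have h0 : ∀ᵐ y : ℝ, y ≠ (0:ℝ) := by
    refine MeasureTheory.ae_iff.mpr ?_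
    simp only [ne_eq, not_not]
    simpa [Set.setOf_eq_eq_singleton] using Real.volume_singleton (a := (0:ℝ))
  have hIeq : (∫ y in (-π)..π, (Real.sin (K * y / 2) ^ 2 / (K * Real.sin (y / 2) ^ 2)) * f (x - y))
      = ∫ y in (-π)..π, T y * f (x - y) := by
    apply intervalIntegral.integral_congr_ae
    filter_upwards [h0] with y hy hmem
    rw [Set.uIoc_of_le (by linarith : -π ≤ π)] at hmem
    rw [hSeqT y (hsin_ne y hmem.1.le hmem.2 hy)]
  -- MVT bound
  have hlip : ∀ y : ℝ, |f (x - y) - f x| ≤ M₁ * |y| := by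
    intro y
    have := Convex.norm_image_sub_le_of_norm_deriv_le
      (fun z _ => hf z)
      (fun z _ => by rw [Real.norm_eq_abs]; exact hfd z)
      convex_univ (Set.mem_univ x) (Set.mem_univ (x - y))
    simpa [Real.norm_eq_abs, abs_sub_comm] using this
  -- pointwise bound
  have hpt : ∀ y ∈ Set.Icc (-π) π, y ≠ 0 →
      |T y * (f (x - y) - f x)| ≤ T y * (δ*M₁) + C := by
    intro y hy hy0
    have hsne := hsin_ne y hy.1 hy.2 hy0
    have hTnn := hT_nonneg y hsne
    rw [abs_mul, abs_of_nonneg hTnn]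
    rcases le_or_gt |y| δ with hyδ | hyδ
    · have h1 : |f (x - y) - f x| ≤ δ * M₁ := by
        calc |f (x - y) - f x| ≤ M₁ * |y| := hlip y
        _ ≤ δ * M₁ := by nlinarith [abs_nonneg y]
      calc T y * |f (x - y) - f x| ≤ T y * (δ*M₁) :=
            mul_le_mul_of_nonneg_left h1 hTnn
      _ ≤ T y * (δ*M₁) + C := le_add_of_nonneg_right hC
    · have h2 : |f (x - y) - f x| ≤ 2*M₀ := by
        have ha := hfb (x - y); have hb := hfb x
        calc |f (x - y) - f x| ≤ |f (x - y)| + |f x| := abs_sub _ _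
        _ ≤ 2*M₀ := by linarith
      have habs : Real.sin (|y|/2)^2 = Real.sin (y/2)^2 := by
        rcases abs_cases y with ⟨h, _⟩ | ⟨h, _⟩ <;> rw [h] <;> simp [neg_div]
      have hss : Real.sin (δ/2)^2 ≤ Real.sin (y/2)^2 := by
        rw [← habs]
        have hmono : Real.sin (δ/2) ≤ Real.sin (|y|/2) := by
          apply Real.strictMonoOn_sin.monotoneOn
          · constructor <;> [linarith; linarith]
          · have h1 : |y| ≤ π := abs_le.mpr ⟨hy.1, hy.2⟩
            constructor <;> [linarith; linarith]
          · linarith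
        nlinarith
      have hTle : T y ≤ 1 / ((K:ℝ) * Real.sin (δ/2)^2) := by
        rw [← hSeqT y hsne]
        apply div_le_div₀ (by norm_num) (Real.sin_sq_le_one _) (by positivity)
          (mul_le_mul_of_nonneg_left hss hK0.le)
      calc T y * |f (x - y) - f x| ≤ T y * (2*M₀) := mul_le_mul_of_nonneg_left h2 hTnn
      _ ≤ (1 / ((K:ℝ) * Real.sin (δ/2)^2)) * (2*M₀) :=
          mul_le_mul_of_nonneg_right hTle (by linarith)
      _ = C := by rw [hCdef]; ring
      _ ≤ T y * (δ*M₁) + C := le_add_of_nonneg_left (mul_nonneg hTnn (by positivity))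
  -- integrability
  have hcf : Continuous fun y => f (x - y) := hf.continuous.comp (by continuity)
  have hint1 : IntervalIntegrable (fun y => T y * (f (x - y) - f x))
      MeasureTheory.volume (-π) π :=
    ((hTcont.mul (hcf.sub continuous_const)).intervalIntegrable _ _)
  have hint2 : IntervalIntegrable (fun y => T y * (δ*M₁) + C)
      MeasureTheory.volume (-π) π :=
    (((hTcont.mul continuous_const).add continuous_const).intervalIntegrable _ _)
  -- integral of the majorant
  have hφ : (∫ y in (-π)..π, (T y * (δ*M₁) + C)) = 2*π*(δ*M₁) + 2*π*C := by
    rw [intervalIntegral.integral_add (f := fun y => T y * (δ*M₁)) (g := fun _ => C)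
      ((hTcont.mul continuous_const).intervalIntegrable _ _)
      intervalIntegrable_const]
    rw [intervalIntegral.integral_mul_const, hTint, intervalIntegral.integral_const,
      smul_eq_mul]
    ring
  -- a.e. monotone integral bound
  have hmono : (∫ y in (-π)..π, |T y * (f (x - y) - f x)|)
      ≤ ∫ y in (-π)..π, (T y * (δ*M₁) + C) := by
    apply intervalIntegral.integral_mono_ae_restrict (by linarith) hint1.abs hint2
    have h0' : ∀ᵐ y : ℝ ∂(MeasureTheory.volume.restrict (Set.Icc (-π) π)), y ≠ (0:ℝ) :=
      MeasureTheory.ae_restrict_of_ae h0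
    have h1' : ∀ᵐ y : ℝ ∂(MeasureTheory.volume.restrict (Set.Icc (-π) π)),
        y ∈ Set.Icc (-π) π := MeasureTheory.ae_restrict_mem measurableSet_Icc
    filter_upwards [h0', h1'] with y hy0 hymem
    exact hpt y hymem hy0
  -- assemble
  have hsub : (1 / (2*π)) * (∫ y in (-π)..π, T y * f (x - y)) - f x
      = (1 / (2*π)) * ∫ y in (-π)..π, T y * (f (x - y) - f x) := by
    have hi1 : IntervalIntegrable (fun y => T y * f (x - y)) MeasureTheory.volume (-π) π :=
      ((hTcont.mul hcf).intervalIntegrable _ _)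
    have hi2 : IntervalIntegrable (fun y => T y * f x) MeasureTheory.volume (-π) π :=
      ((hTcont.mul continuous_const).intervalIntegrable _ _)
    have hs : (∫ y in (-π)..π, T y * (f (x - y) - f x))
        = (∫ y in (-π)..π, T y * f (x - y)) - ∫ y in (-π)..π, T y * f x := by
      rw [← intervalIntegral.integral_sub hi1 hi2]
      congr 1
      ext y
      ring
    rw [hs, intervalIntegral.integral_mul_const, hTint]
    field_simp
  rw [hIeq, hsub]
  have habs : |(1 / (2*π)) * ∫ y in (-π)..π, T y * (f (x - y) - f x)|
      ≤ (1 / (2*π)) * ∫ y in (-π)..π, |T y * (f (x - y) - f x)| := by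
    rw [abs_mul, abs_of_nonneg (by positivity : (0:ℝ) ≤ 1 / (2*π))]
    apply mul_le_mul_of_nonneg_left _ (by positivity)
    have h := intervalIntegral.norm_integral_le_integral_norm (μ := MeasureTheory.volume)
        (f := fun y => T y * (f (x - y) - f x)) (a := -π) (b := π) (by linarith)
    simp only [Real.norm_eq_abs] at h
    exact h
  calc |(1 / (2*π)) * ∫ y in (-π)..π, T y * (f (x - y) - f x)|
      ≤ (1 / (2*π)) * ∫ y in (-π)..π, |T y * (f (x - y) - f x)| := habs
  _ ≤ (1 / (2*π)) * (2*π*(δ*M₁) + 2*π*C) := by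
      rw [← hφ]
      exact mul_le_mul_of_nonneg_left hmono (by positivity)
  _ = δ * M₁ + C := by field_simp
end
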